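/- Let u, v, k be positive integers with min{u,v,k} > 1 and gcd(u,v) = 1. If (l₁,m₁) and (l₂,m₂) are two positive integer solutions of u^l + v^m = k with l₁ < l₂ and m₁ > m₂, then there exists a positive integer t such that u^(l₂−l₁) = v^(m₂)·t + 1 and v^(m₁−m₂) = u^(l₁)·t + 1. -/

import Mathlib

theorem stmt_3 (u v k l₁ m₁ l₂ m₂ : ℕ)
    (hu : 1 < u) (hv : 1 < v) (hk : 1 < k) (huv : Nat.Coprime u v)
    (hl₁ : 0 < l₁) (hm₁ : 0 < m₁) (hl₂ : 0 < l₂) (hm₂ : 0 < m₂)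
    (h1 : u ^ l₁ + v ^ m₁ = k) (h2 : u ^ l₂ + v ^ m₂ = k)
    (hl : l₁ < l₂) (hm : m₂ < m₁) :
    ∃ t : ℕ, 0 < t ∧ u ^ (l₂ - l₁) = v ^ m₂ * t + 1 ∧
      v ^ (m₁ - m₂) = u ^ l₁ * t + 1 := by
  have hu1 : 1 ≤ u ^ (l₂ - l₁) := Nat.one_le_pow _ _ (by omega)
  have hv1 : 1 ≤ v ^ (m₁ - m₂) := Nat.one_le_pow _ _ (by omega)
  have key : u ^ l₁ * (u ^ (l₂ - l₁) - 1) = v ^ m₂ * (v ^ (m₁ - m₂) - 1) := by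
    have e1 : u ^ l₁ * u ^ (l₂ - l₁) = u ^ l₂ := by
      rw [← pow_add]; congr 1; omega
    have e2 : v ^ m₂ * v ^ (m₁ - m₂) = v ^ m₁ := by
      rw [← pow_add]; congr 1; omega
    have hle : u ^ l₁ ≤ u ^ l₂ := Nat.pow_le_pow_right (by omega) (by omega)
    zify [hu1, hv1]
    push_cast [← e1, ← e2] at h1 h2 ⊢
    ring_nf
    ring_nf at h1 h2
    linarith
  have hcop : Nat.Coprime (v ^ m₂) (u ^ l₁) := Nat.Coprime.pow _ _ huv.symm
  have hdvd : v ^ m₂ ∣ u ^ (l₂ - l₁) - 1 := by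
    have : v ^ m₂ ∣ u ^ l₁ * (u ^ (l₂ - l₁) - 1) := Dvd.intro _ key.symm
    exact (Nat.Coprime.dvd_of_dvd_mul_left hcop this)
  obtain ⟨t, ht⟩ := hdvd
  have hgt : 1 < u ^ (l₂ - l₁) := by
    calc 1 < u := hu
    _ ≤ u ^ (l₂ - l₁) := Nat.le_self_pow (by omega) _
  have ht0 : 0 < t := by
    rcases Nat.eq_zero_or_pos t with h | h
    · simp [h] at ht; omega
    · exact h
  refine ⟨t, ht0, by omega, ?_⟩
  have hv0 : 0 < v ^ m₂ := Nat.pow_pos (by omega)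
  have : v ^ m₂ * (u ^ l₁ * t) = v ^ m₂ * (v ^ (m₁ - m₂) - 1) := by
    rw [← key, ht]; ring
  have := Nat.eq_of_mul_eq_mul_left hv0 this
  omega
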